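/- arXiv:quant-ph/0510086 — 3 statements merged into one kernel-verified Lean document; each statement's English description precedes it below -/
import Mathlib

section
/- For every ε > 0, the integral I(ε) := ∫_{-∞}^{∞} e^{-x²/2}/(x²+ε) dx equals π·√(e^ε/ε)·(1 − erf(√(ε/2))), where erf(x) = (2/√π)∫₀ˣ e^{-u²} du. -/
open MeasureTheory Real Set

/-- The error function `erf x = (2/√π) ∫₀ˣ e^{-u²} du`. -/
noncomputable def erf (x : ℝ) : ℝ := (2 / Real.sqrt π) * ∫ u in (0:ℝ)..x, Real.exp (-u ^ 2)

theorem stmt_0 (ε : ℝ) (hε : 0 < ε) :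
    ∫ x : ℝ, Real.exp (-x ^ 2 / 2) / (x ^ 2 + ε) =
      π * Real.sqrt (Real.exp ε / ε) * (1 - erf (Real.sqrt (ε / 2))) := by
  set f : ℝ → ℝ → ℝ := fun x s => Real.exp (-((s + 1/2) * x ^ 2)) * Real.exp (-(ε * s)) with hf
  -- Step 1: pointwise identity 1/(x²+ε) = ∫_{s>0} e^{-(x²+ε)s}
  have h1 : ∀ x : ℝ, Real.exp (-x ^ 2 / 2) / (x ^ 2 + ε) = ∫ s in Ioi (0:ℝ), f x s := by
    intro x
    have hpos : 0 < x ^ 2 + ε := by positivity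
    have l1 : ∫ s in Ioi (0:ℝ), Real.exp (-((x ^ 2 + ε) * s)) = (x ^ 2 + ε)⁻¹ := by
      have := integral_comp_mul_left_Ioi (fun u => Real.exp (-u)) 0 hpos
      simpa only [mul_zero, integral_exp_neg_Ioi_zero, mul_one, smul_eq_mul] using this
    calc Real.exp (-x ^ 2 / 2) / (x ^ 2 + ε)
        = Real.exp (-x ^ 2 / 2) * ∫ s in Ioi (0:ℝ), Real.exp (-((x ^ 2 + ε) * s)) := by
          rw [l1]; ring
      _ = ∫ s in Ioi (0:ℝ), Real.exp (-x ^ 2 / 2) * Real.exp (-((x ^ 2 + ε) * s)) :=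
          (integral_const_mul _ _).symm
      _ = ∫ s in Ioi (0:ℝ), f x s := by
          congr 1; funext s
          simp only [hf, ← Real.exp_add]; congr 1; ring
  -- Step 2: integrability on the product for Fubini
  have hInt : Integrable (Function.uncurry f) (volume.prod (volume.restrict (Ioi (0:ℝ)))) := by
    have hcont : Continuous (Function.uncurry f) := by
      apply Continuous.mul <;> fun_prop
    have hg : Integrable (fun p : ℝ × ℝ => Real.exp (-(1/2 * p.1 ^ 2)) * Real.exp (-(ε * p.2)))
        (volume.prod (volume.restrict (Ioi (0:ℝ)))) := by
      have i1 : Integrable (fun x : ℝ => Real.exp (-(1/2 * x ^ 2))) volume := by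
        simpa [neg_mul] using integrable_exp_neg_mul_sq (show (0:ℝ) < 1/2 by norm_num)
      have i2 : Integrable (fun s : ℝ => Real.exp (-(ε * s))) (volume.restrict (Ioi (0:ℝ))) := by
        simpa only [neg_mul] using (exp_neg_integrableOn_Ioi 0 hε).integrable
      exact i1.mul_prod i2
    refine hg.mono hcont.aestronglyMeasurable ?_
    have hmem : ∀ᵐ p : ℝ × ℝ ∂(volume.prod (volume.restrict (Ioi (0:ℝ)))),
        p ∈ (univ : Set ℝ) ×ˢ Ioi (0:ℝ) := by
      rw [show (volume : Measure ℝ).prod (volume.restrict (Ioi (0:ℝ)))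
          = ((volume : Measure ℝ).prod volume).restrict (univ ×ˢ Ioi (0:ℝ)) by
        rw [← Measure.prod_restrict, Measure.restrict_univ]]
      exact ae_restrict_mem (MeasurableSet.univ.prod measurableSet_Ioi)
    filter_upwards [hmem] with p hp
    have hs : 0 < p.2 := hp.2
    have hb : Real.exp (-((p.2 + 1/2) * p.1 ^ 2)) ≤ Real.exp (-(1/2 * p.1 ^ 2)) := by
      apply Real.exp_le_exp.2; nlinarith [sq_nonneg p.1]
    have h0 : (0:ℝ) < Real.exp (-(ε * p.2)) := Real.exp_pos _
    simp only [Function.uncurry, hf, norm_mul, Real.norm_eq_abs,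
      abs_of_pos (Real.exp_pos _)]
    exact mul_le_mul_of_nonneg_right hb (Real.exp_pos _).le
  -- Step 3: swap
  have h2 : ∫ x : ℝ, Real.exp (-x ^ 2 / 2) / (x ^ 2 + ε)
      = ∫ s in Ioi (0:ℝ), ∫ x : ℝ, f x s := by
    simp_rw [h1]; exact integral_integral_swap hInt
  -- Step 4: inner Gaussian integral
  have h3 : EqOn (fun s => ∫ x : ℝ, f x s)
      (fun s => Real.exp (-(ε * s)) * Real.sqrt (π / (s + 1/2))) (Ioi (0:ℝ)) := by
    intro s _
    simp only [hf]
    rw [integral_mul_const, mul_comm]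
    congr 1
    simpa only [neg_mul] using integral_gaussian (s + 1/2)
  -- Step 5: substitution s = w² - 1/2
  set c := Real.sqrt (1/2) with hcdef
  have hc0 : 0 < c := Real.sqrt_pos.mpr (by norm_num)
  have hc2 : c ^ 2 = 1/2 := Real.sq_sqrt (by norm_num)
  have himg : (fun w : ℝ => w ^ 2 - 1/2) '' Ioi c = Ioi (0:ℝ) := by
    ext y; constructor
    · rintro ⟨w, hw, rfl⟩
      simp only [mem_Ioi] at hw ⊢
      nlinarith [hc0.le]
    · intro hy
      simp only [mem_Ioi] at hy
      refine ⟨Real.sqrt (y + 1/2), ?_, ?_⟩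
      · exact Real.sqrt_lt_sqrt (by norm_num) (by linarith)
      · show Real.sqrt (y + 1/2) ^ 2 - 1/2 = y
        rw [Real.sq_sqrt (by linarith)]; ring
  have hderiv : ∀ w ∈ Ioi c, HasDerivWithinAt (fun w : ℝ => w ^ 2 - 1/2) (2 * w) (Ioi c) w := by
    intro w _
    simpa using ((hasDerivAt_pow 2 w).sub_const (1/2)).hasDerivWithinAt
  have hinj : InjOn (fun w : ℝ => w ^ 2 - 1/2) (Ioi c) := by
    intro a ha b hb hab
    simp only [mem_Ioi] at ha hb
    have ha0 : 0 ≤ a := le_trans hc0.le ha.le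
    have hb0 : 0 ≤ b := le_trans hc0.le hb.le
    have : a ^ 2 = b ^ 2 := by dsimp at hab; linarith
    calc a = Real.sqrt (a ^ 2) := (Real.sqrt_sq ha0).symm
      _ = Real.sqrt (b ^ 2) := by rw [this]
      _ = b := Real.sqrt_sq hb0
  have h4 := integral_image_eq_integral_abs_deriv_smul measurableSet_Ioi hderiv hinj
    (fun s => Real.exp (-(ε * s)) * Real.sqrt (π / (s + 1/2)))
  rw [himg] at h4
  have h5 : EqOn
      (fun w : ℝ => |2 * w| • (Real.exp (-(ε * (w ^ 2 - 1/2))) * Real.sqrt (π / (w ^ 2 - 1/2 + 1/2))))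
      (fun w : ℝ => (2 * Real.sqrt π * Real.exp (ε / 2)) * Real.exp (-(ε * w ^ 2))) (Ioi c) := by
    intro w hw
    have hw0 : 0 < w := lt_trans hc0 hw
    simp only [smul_eq_mul]
    rw [show w ^ 2 - 1/2 + 1/2 = w ^ 2 by ring,
      Real.sqrt_div pi_pos.le, Real.sqrt_sq hw0.le,
      abs_of_pos (by linarith : (0:ℝ) < 2 * w),
      show -(ε * (w ^ 2 - 1/2)) = ε / 2 + -(ε * w ^ 2) by ring, Real.exp_add]
    field_simp
  rw [setIntegral_congr_fun measurableSet_Ioi h5] at h4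
  -- Step 6: rescale u = √ε · w
  have hse : 0 < Real.sqrt ε := Real.sqrt_pos.mpr hε
  have h6 : ∫ w in Ioi c, Real.exp (-(ε * w ^ 2))
      = (Real.sqrt ε)⁻¹ * ∫ u in Ioi (Real.sqrt (ε / 2)), Real.exp (-u ^ 2) := by
    have key := integral_comp_mul_left_Ioi (fun u => Real.exp (-u ^ 2)) c hse
    have e1 : ∀ w : ℝ, Real.exp (-(Real.sqrt ε * w) ^ 2) = Real.exp (-(ε * w ^ 2)) := by
      intro w; congr 1; rw [mul_pow, Real.sq_sqrt hε.le]
    simp only [e1, smul_eq_mul] at key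
    rw [key, hcdef, ← Real.sqrt_mul hε.le, show ε * (1/2) = ε / 2 by ring]
  -- Step 7: tail integral and erf
  set a := Real.sqrt (ε / 2) with hadef
  have ha0 : 0 ≤ a := Real.sqrt_nonneg _
  have hint : Integrable (fun u : ℝ => Real.exp (-u ^ 2)) := by
    simpa [neg_mul] using integrable_exp_neg_mul_sq (one_pos (α := ℝ))
  have h7 : ∫ u in Ioi a, Real.exp (-u ^ 2)
      = Real.sqrt π / 2 - ∫ u in (0:ℝ)..a, Real.exp (-u ^ 2) := by
    have hu : ∫ u in Ioi (0:ℝ), Real.exp (-u ^ 2) = Real.sqrt π / 2 := by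
      simpa using integral_gaussian_Ioi 1
    rw [← Ioc_union_Ioi_eq_Ioi ha0,
      setIntegral_union (Ioc_disjoint_Ioi le_rfl) measurableSet_Ioi
        hint.integrableOn hint.integrableOn] at hu
    rw [intervalIntegral.integral_of_le ha0]
    linarith
  -- Final assembly
  rw [h2, setIntegral_congr_fun measurableSet_Ioi h3, h4, integral_const_mul, h6, h7]
  rw [erf, show Real.sqrt (Real.exp ε / ε) = Real.exp (ε / 2) / Real.sqrt ε by
    rw [Real.sqrt_div (Real.exp_pos ε).le, ← Real.exp_half]]
  have hπ : Real.sqrt π * Real.sqrt π = π := Real.mul_self_sqrt pi_pos.le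
  have hπ0 : Real.sqrt π ≠ 0 := by positivity
  have hε0 : Real.sqrt ε ≠ 0 := hse.ne'
  generalize hP : Real.sqrt π = P at hπ hπ0 ⊢
  generalize hQ : Real.sqrt ε = Q at hε0 ⊢
  rw [← hπ]
  field_simp
end

section
/- For every ε > 0, the integral J(ε) := ∫_{-∞}^{∞} e^{-x²/2}/(x²+ε)² dx satisfies J(ε) = (√(2π) + (1−ε)·I(ε))/(2ε), where I(ε) := ∫_{-∞}^{∞} e^{-x²/2}/(x²+ε) dx. -/
open MeasureTheory Real Filter

theorem stmt_1 (ε : ℝ) (hε : 0 < ε) :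
    ∫ x : ℝ, Real.exp (-x ^ 2 / 2) / (x ^ 2 + ε) ^ 2 =
      (Real.sqrt (2 * π) +
        (1 - ε) * ∫ x : ℝ, Real.exp (-x ^ 2 / 2) / (x ^ 2 + ε)) / (2 * ε) := by
  have hne : ∀ x : ℝ, x ^ 2 + ε ≠ 0 := fun x => by positivity
  have hG : Integrable (fun x : ℝ => Real.exp (-x ^ 2 / 2)) := by
    have := integrable_exp_neg_mul_sq (b := (1:ℝ)/2) (by norm_num)
    convert this using 2 with x
    ring_nf
  have hI : Integrable (fun x : ℝ => Real.exp (-x ^ 2 / 2) / (x ^ 2 + ε)) := by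
    refine (hG.mul_const ε⁻¹).mono' ?_ ?_
    · exact (Real.continuous_exp.comp (by continuity)).div (by continuity) hne |>.aestronglyMeasurable
    · filter_upwards with x
      rw [Real.norm_eq_abs, abs_of_nonneg (by positivity), ← div_eq_mul_inv]
      have h1 : ε ≤ x ^ 2 + ε := by nlinarith [sq_nonneg x]
      gcongr
  have hJ : Integrable (fun x : ℝ => Real.exp (-x ^ 2 / 2) / (x ^ 2 + ε) ^ 2) := by
    refine (hG.mul_const (ε ^ 2)⁻¹).mono' ?_ ?_
    · exact (Real.continuous_exp.comp (by continuity)).div (by continuity)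
        (fun x => pow_ne_zero 2 (hne x)) |>.aestronglyMeasurable
    · filter_upwards with x
      rw [Real.norm_eq_abs, abs_of_nonneg (by positivity), ← div_eq_mul_inv]
      have h1 : ε ^ 2 ≤ (x ^ 2 + ε) ^ 2 := by nlinarith [sq_nonneg x]
      gcongr
  set g : ℝ → ℝ := fun x => x * Real.exp (-x ^ 2 / 2) / (x ^ 2 + ε) with hg
  set g' : ℝ → ℝ := fun x =>
    2 * ε * (Real.exp (-x ^ 2 / 2) / (x ^ 2 + ε) ^ 2) +
      (ε - 1) * (Real.exp (-x ^ 2 / 2) / (x ^ 2 + ε)) - Real.exp (-x ^ 2 / 2) with hg'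
  have hderiv : ∀ x : ℝ, HasDerivAt g (g' x) x := by
    intro x
    have h1 : HasDerivAt (fun x : ℝ => -x ^ 2 / 2) (-x) x := by
      have := ((hasDerivAt_pow 2 x).neg).div_const 2
      refine this.congr_deriv ?_
      ring
    have hexp : HasDerivAt (fun x : ℝ => Real.exp (-x ^ 2 / 2))
        (Real.exp (-x ^ 2 / 2) * (-x)) x := (Real.hasDerivAt_exp _).comp x h1
    have hnum : HasDerivAt (fun x : ℝ => x * Real.exp (-x ^ 2 / 2))
        (1 * Real.exp (-x ^ 2 / 2) + x * (Real.exp (-x ^ 2 / 2) * (-x))) x :=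
      (hasDerivAt_id x).mul hexp
    have hden : HasDerivAt (fun x : ℝ => x ^ 2 + ε) (2 * x) x := by
      simpa using (hasDerivAt_pow 2 x).add_const ε
    have h2 := hnum.div hden (hne x)
    refine h2.congr_deriv ?_
    symm
    rw [hg']
    rw [eq_div_iff (pow_ne_zero 2 (hne x))]
    field_simp
    ring
  -- limits at infinity
  have hexp_top : Tendsto (fun x : ℝ => Real.exp (-x ^ 2 / 2)) atTop (nhds 0) := by
    apply Real.tendsto_exp_atBot.comp
    have h1 : Tendsto (fun x : ℝ => x ^ 2 / 2) atTop atTop :=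
      (tendsto_pow_atTop two_ne_zero).atTop_div_const two_pos
    exact (tendsto_neg_atTop_atBot.comp h1).congr (fun x => by simp [Function.comp]; ring)
  have hexp_bot : Tendsto (fun x : ℝ => Real.exp (-x ^ 2 / 2)) atBot (nhds 0) := by
    have h2 := hexp_top.comp tendsto_neg_atBot_atTop
    exact h2.congr (fun x => by simp [Function.comp])
  have hbound : ∀ x : ℝ, ‖g x‖ ≤ Real.exp (-x ^ 2 / 2) / (2 * Real.sqrt ε) := by
    intro x
    have hpos : (0:ℝ) < x ^ 2 + ε := by positivity
    have hs : 0 < Real.sqrt ε := Real.sqrt_pos.mpr hε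
    have hs2 : Real.sqrt ε ^ 2 = ε := Real.sq_sqrt hε.le
    have hval : ‖g x‖ = |x| * Real.exp (-x ^ 2 / 2) / (x ^ 2 + ε) := by
      rw [hg, Real.norm_eq_abs, abs_div, abs_mul, Real.abs_exp, abs_of_pos hpos]
    rw [hval, div_le_div_iff₀ hpos (by positivity)]
    have hAM : 0 ≤ x ^ 2 + ε - 2 * Real.sqrt ε * |x| := by
      nlinarith [sq_nonneg (|x| - Real.sqrt ε), sq_abs x]
    nlinarith [mul_nonneg hAM (Real.exp_pos (-x ^ 2 / 2)).le,
      (Real.exp_pos (-x ^ 2 / 2)).le, abs_nonneg x]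
  have hg_top : Tendsto g atTop (nhds 0) :=
    squeeze_zero_norm hbound (by simpa using hexp_top.div_const (2 * Real.sqrt ε))
  have hg_bot : Tendsto g atBot (nhds 0) :=
    squeeze_zero_norm hbound (by simpa using hexp_bot.div_const (2 * Real.sqrt ε))
  -- integrability of g-prime
  have hg'_int : Integrable g' := by
    rw [hg']
    exact (((hJ.const_mul (2 * ε)).add (hI.const_mul (ε - 1))).sub hG)
  have hzero : ∫ x, g' x = 0 := by
    have := integral_of_hasDerivAt_of_tendsto hderiv hg'_int hg_bot hg_top
    simpa using this
  -- split the integral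
  have hsplit : ∫ x, g' x =
      2 * ε * (∫ x : ℝ, Real.exp (-x ^ 2 / 2) / (x ^ 2 + ε) ^ 2) +
        (ε - 1) * (∫ x : ℝ, Real.exp (-x ^ 2 / 2) / (x ^ 2 + ε)) -
        ∫ x : ℝ, Real.exp (-x ^ 2 / 2) := by
    have hfg : Integrable (fun x : ℝ =>
        2 * ε * (Real.exp (-x ^ 2 / 2) / (x ^ 2 + ε) ^ 2) +
          (ε - 1) * (Real.exp (-x ^ 2 / 2) / (x ^ 2 + ε))) :=
      (hJ.const_mul (2 * ε)).add (hI.const_mul (ε - 1))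
    rw [hg']
    rw [integral_sub hfg hG,
      integral_add (hJ.const_mul (2 * ε)) (hI.const_mul (ε - 1)),
      integral_const_mul, integral_const_mul]
  have hgauss : ∫ x : ℝ, Real.exp (-x ^ 2 / 2) = Real.sqrt (2 * π) := by
    have := integral_gaussian ((1:ℝ)/2)
    rw [show π / ((1:ℝ)/2) = 2 * π by ring] at this
    rw [← this]
    congr 1 with x
    ring_nf
  rw [hsplit, hgauss] at hzero
  have h2ε : (2:ℝ) * ε ≠ 0 := by positivity
  rw [eq_div_iff h2ε]
  linear_combination hzero
end

section
/- Let M : B → M₂(ℂ) be a unital completely positive map, and let Y, Ỹ be commuting self-adjoint elements of B with M(Y) = X and M(Ỹ) = X̃ self-adjoint in M₂(ℂ). Define σ² = ‖M(Y²) − M(Y)²‖ and σ̃² = ‖M(Ỹ²) − M(Ỹ)²‖. Then 2σσ̃ ≥ ‖[X, X̃]‖. -/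
open Matrix
open scoped Matrix.Norms.L2Operator ComplexOrder

noncomputable instance : CStarAlgebra (Matrix (Fin 2) (Fin 2) ℂ) :=
  letI : CompleteSpace (Matrix (Fin 2) (Fin 2) ℂ) := FiniteDimensional.complete ℂ _
  { }

lemma aux_norm_le (K P : Matrix (Fin 2) (Fin 2) ℂ)
    (h1 : (P - K).PosSemidef) (h2 : (P + K).PosSemidef) : ‖K‖ ≤ ‖P‖ := by
  have hfac : ∀ Q : Matrix (Fin 2) (Fin 2) ℂ, Q.PosSemidef →
      ∃ B : Matrix (Fin 2) (Fin 2) ℂ, Q = Bᴴ * B := by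
    open scoped MatrixOrder in
    intro Q hQ
    obtain ⟨B, rfl⟩ := CStarAlgebra.nonneg_iff_eq_star_mul_self.mp hQ.nonneg
    exact ⟨B, rfl⟩
  letI : PartialOrder (Matrix (Fin 2) (Fin 2) ℂ) := CStarAlgebra.spectralOrder _
  haveI : StarOrderedRing (Matrix (Fin 2) (Fin 2) ℂ) := CStarAlgebra.spectralOrderedRing _
  have hpos : ∀ Q : Matrix (Fin 2) (Fin 2) ℂ, Q.PosSemidef → 0 ≤ Q := by
    intro Q hQ
    obtain ⟨B, hB⟩ := hfac Q hQ
    rw [hB, ← Matrix.star_eq_conjTranspose]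
    exact star_mul_self_nonneg B
  have h1' : K ≤ P := sub_nonneg.mp (hpos _ h1)
  have h2' : -K ≤ P := by
    have := hpos _ h2
    rw [← sub_neg_eq_add] at this
    exact sub_nonneg.mp this
  have e1 : _root_.IsSelfAdjoint (P - K) := .of_nonneg (hpos _ h1)
  have e2 : _root_.IsSelfAdjoint (P + K) := .of_nonneg (hpos _ h2)
  have hK2 : _root_.IsSelfAdjoint (K + K) := by
    have := e2.sub e1
    rwa [show P + K - (P - K) = K + K by abel] at this
  have hKsa : _root_.IsSelfAdjoint K := by
    have h := hK2
    rw [_root_.IsSelfAdjoint, star_add, ← two_smul ℂ, ← two_smul ℂ] at h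
    exact smul_right_injective _ two_ne_zero h
  have hPsa : _root_.IsSelfAdjoint P := by
    have := e1.add hKsa
    rwa [show P - K + K = P by abel] at this
  have hKP : K ≤ algebraMap ℝ _ ‖P‖ := h1'.trans (IsSelfAdjoint.le_algebraMap_norm_self hPsa)
  have hKP' : -K ≤ algebraMap ℝ _ ‖P‖ := h2'.trans (IsSelfAdjoint.le_algebraMap_norm_self hPsa)
  have hs1 : ∀ x ∈ spectrum ℝ K, x ≤ ‖P‖ := (le_algebraMap_iff_spectrum_le hKsa).mp hKP
  have hs2 : ∀ x ∈ spectrum ℝ (-K), x ≤ ‖P‖ := (le_algebraMap_iff_spectrum_le hKsa.neg).mp hKP'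
  rcases CStarAlgebra.norm_or_neg_norm_mem_spectrum hKsa with h | h
  · exact hs1 _ h
  · have : ‖K‖ ∈ spectrum ℝ (-K) := by
      rw [← spectrum.neg_eq]
      simpa using Set.neg_mem_neg.mpr h
    exact hs2 _ this

lemma aux_expand {R : Type*} [Ring R] [Algebra ℂ R] (t c : ℂ) (y z : R) :
    (t • y - c • z) * (t • y + c • z)
      = (t * t) • (y * y) + (t * c) • (y * z - z * y) - (c * c) • (z * z) := by
  simp only [sub_mul, mul_add, smul_mul_assoc, mul_smul_comm, smul_smul, smul_sub,
    mul_comm c t]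
  abel

lemma aux_opt {a b c : ℝ} (ha : 0 ≤ a) (hb : 0 ≤ b) (hc : 0 ≤ c)
    (h : ∀ s : ℝ, 0 < s → c ≤ s * a + b / s) :
    c ≤ 2 * Real.sqrt a * Real.sqrt b := by
  rcases eq_or_lt_of_le ha with ha0 | ha0
  · have hble : c ≤ 0 := by
      by_contra hc0
      push_neg at hc0
      have h1 := h (b / c + 1) (by positivity)
      rw [← ha0, mul_zero, zero_add] at h1
      have h2 : c * (b / c + 1) ≤ b := (le_div_iff₀ (by positivity)).mp h1
      rw [mul_add, mul_one, mul_div_cancel₀ _ (ne_of_gt hc0)] at h2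
      linarith
    have : c = 0 := le_antisymm hble hc
    rw [this]
    positivity
  rcases eq_or_lt_of_le hb with hb0 | hb0
  · have hble : c ≤ 0 := by
      by_contra hc0
      push_neg at hc0
      have h1 := h (c / (2 * a)) (by positivity)
      rw [← hb0, zero_div, add_zero, div_mul_eq_mul_div, mul_comm c, ← div_mul_eq_mul_div] at h1
      have ha' : a ≠ 0 := ne_of_gt ha0
      have e : a / (2 * a) = 1 / 2 := by
        field_simp
      rw [e] at h1
      linarith
    have : c = 0 := le_antisymm hble hc
    rw [this]
    positivity
  · have hsa := Real.sqrt_pos.mpr ha0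
    have hsb := Real.sqrt_pos.mpr hb0
    have h1 := h (Real.sqrt b / Real.sqrt a) (by positivity)
    have e1 : Real.sqrt b / Real.sqrt a * a = Real.sqrt b * Real.sqrt a := by
      rw [div_mul_eq_mul_div, mul_div_assoc, Real.div_sqrt]
    have e2 : b / (Real.sqrt b / Real.sqrt a) = Real.sqrt b * Real.sqrt a := by
      rw [div_div_eq_mul_div, mul_comm b, mul_div_assoc, Real.div_sqrt, mul_comm]
    rw [e1, e2] at h1
    linarith


/-- A linear map into `2×2` complex matrices is completely positive if all the
matrices `∑ᵢⱼ bᵢᴴ M(aᵢ* aⱼ) bⱼ` are positive semidefinite. -/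
def IsCompletelyPositive {B : Type*} [NormedRing B] [StarRing B] [NormedAlgebra ℂ B]
    (M : B →ₗ[ℂ] Matrix (Fin 2) (Fin 2) ℂ) : Prop :=
  ∀ (n : ℕ) (a : Fin n → B) (b : Fin n → Matrix (Fin 2) (Fin 2) ℂ),
    (∑ i, ∑ j, (b i)ᴴ * M (star (a i) * a j) * b j).PosSemidef

section Aux
variable {B : Type*} [NormedRing B] [StarRing B] [NormedAlgebra ℂ B]
  (M : B →ₗ[ℂ] Matrix (Fin 2) (Fin 2) ℂ)

lemma aux_KS (hM1 : M 1 = 1) (hMcp : IsCompletelyPositive M) (a : B)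
    (hsa : M (star a) = (M a)ᴴ) :
    (M (star a * a) - (M a)ᴴ * M a).PosSemidef := by
  have h := hMcp 2 ![1, a] ![-(M a), 1]
  simp only [Fin.sum_univ_two, Matrix.cons_val_zero, Matrix.cons_val_one, Matrix.head_cons,
    star_one, one_mul, mul_one, hM1, conjTranspose_neg, conjTranspose_one, hsa,
    Matrix.neg_mul, Matrix.mul_neg, Matrix.mul_one, Matrix.one_mul, neg_neg] at h
  convert h using 1
  abel
end Aux

theorem stmt_12 {B : Type*} [NormedRing B] [StarRing B] [CStarRing B]
    [NormedAlgebra ℂ B] [StarModule ℂ B]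
    (M : B →ₗ[ℂ] Matrix (Fin 2) (Fin 2) ℂ) (hM1 : M 1 = 1)
    (hMcp : IsCompletelyPositive M)
    (Y Ytilde : B) (hY : IsSelfAdjoint Y) (hYt : IsSelfAdjoint Ytilde)
    (hcomm : Y * Ytilde = Ytilde * Y)
    (hX : IsSelfAdjoint (M Y)) (hXt : IsSelfAdjoint (M Ytilde)) :
    ‖M Y * M Ytilde - M Ytilde * M Y‖ ≤
      2 * Real.sqrt ‖M (Y ^ 2) - (M Y) ^ 2‖ * Real.sqrt ‖M (Ytilde ^ 2) - (M Ytilde) ^ 2‖ := by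
  set X := M Y with hXdef
  set Xt := M Ytilde with hXtdef
  set C : Matrix (Fin 2) (Fin 2) ℂ := X * Xt - Xt * X with hCdef
  set D : Matrix (Fin 2) (Fin 2) ℂ := M (Y * Y) - X * X with hDdef
  set Dt : Matrix (Fin 2) (Fin 2) ℂ := M (Ytilde * Ytilde) - Xt * Xt with hDtdef
  have key : ∀ s : ℝ, 0 < s → ‖C‖ ≤ s * ‖D‖ + ‖Dt‖ / s := by
    intro s hs
    set t : ℝ := Real.sqrt s with htdef
    have ht : 0 < t := Real.sqrt_pos.mpr hs
    have hts : t * t = s := Real.mul_self_sqrt hs.le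
    set tc : ℂ := (t : ℂ) with htcdef
    have htc : tc ≠ 0 := by
      simp only [htcdef, ne_eq, Complex.ofReal_eq_zero]
      exact ne_of_gt ht
    set c : ℂ := Complex.I / tc with hcdef
    have hstar_t : star tc = tc := by
      rw [htcdef, Complex.star_def, Complex.conj_ofReal]
    have hstar_c : star c = -c := by
      rw [hcdef, star_div₀, hstar_t, Complex.star_def, Complex.conj_I, neg_div]
    have htcc : tc * c = Complex.I := by
      rw [hcdef, mul_comm, div_mul_cancel₀ _ htc]
    have hcc : -(c * c) = 1 / (tc * tc) := by
      rw [hcdef, div_mul_div_comm, Complex.I_mul_I, neg_div, neg_neg]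
    have hstarX : Xᴴ = X := by rw [← Matrix.star_eq_conjTranspose]; exact hX.star_eq
    have hstarXt : Xtᴴ = Xt := by rw [← Matrix.star_eq_conjTranspose]; exact hXt.star_eq
    have hstar_plus : star (tc • Y + c • Ytilde) = tc • Y - c • Ytilde := by
      rw [star_add, star_smul, star_smul, hY.star_eq, hYt.star_eq, hstar_t, hstar_c,
        neg_smul, ← sub_eq_add_neg]
    have hstar_minus : star (tc • Y - c • Ytilde) = tc • Y + c • Ytilde := by
      rw [star_sub, star_smul, star_smul, hY.star_eq, hYt.star_eq, hstar_t, hstar_c,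
        neg_smul, sub_neg_eq_add]
    have hMsa_plus : M (star (tc • Y + c • Ytilde)) = (M (tc • Y + c • Ytilde))ᴴ := by
      rw [hstar_plus, ← Matrix.star_eq_conjTranspose]
      simp only [map_sub, map_add, LinearMap.map_smul, star_add, star_sub, star_smul,
        hstar_t, hstar_c, ← hXdef, ← hXtdef, hX.star_eq, hXt.star_eq, neg_smul]
      abel
    have hMsa_minus : M (star (tc • Y - c • Ytilde)) = (M (tc • Y - c • Ytilde))ᴴ := by
      rw [hstar_minus, ← Matrix.star_eq_conjTranspose]
      simp only [map_sub, map_add, LinearMap.map_smul, star_add, star_sub, star_smul,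
        hstar_t, hstar_c, ← hXdef, ← hXtdef, hX.star_eq, hXt.star_eq, neg_smul]
      abel
    have hplus := aux_KS M hM1 hMcp (tc • Y + c • Ytilde) hMsa_plus
    have hminus := aux_KS M hM1 hMcp (tc • Y - c • Ytilde) hMsa_minus
    have hprod_plus : star (tc • Y + c • Ytilde) * (tc • Y + c • Ytilde)
        = (tc * tc) • (Y * Y) - (c * c) • (Ytilde * Ytilde) := by
      rw [hstar_plus, aux_expand, hcomm, sub_self, smul_zero, add_zero]
    have hprod_minus : star (tc • Y - c • Ytilde) * (tc • Y - c • Ytilde)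
        = (tc * tc) • (Y * Y) - (c * c) • (Ytilde * Ytilde) := by
      rw [hstar_minus]
      have h := aux_expand tc (-c) Y Ytilde
      rw [neg_smul, sub_neg_eq_add, ← sub_eq_add_neg] at h
      rw [h, hcomm, sub_self, smul_zero, add_zero, neg_mul_neg]
    have hMquad_plus : (M (tc • Y + c • Ytilde))ᴴ * M (tc • Y + c • Ytilde)
        = (tc * tc) • (X * X) + Complex.I • C - (c * c) • (Xt * Xt) := by
      rw [← hMsa_plus, hstar_plus, map_sub, LinearMap.map_smul, LinearMap.map_smul,
        map_add, LinearMap.map_smul, LinearMap.map_smul, ← hXdef, ← hXtdef, aux_expand,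
        htcc, ← hCdef]
    have hMquad_minus : (M (tc • Y - c • Ytilde))ᴴ * M (tc • Y - c • Ytilde)
        = (tc * tc) • (X * X) - Complex.I • C - (c * c) • (Xt * Xt) := by
      have h := aux_expand tc (-c) X Xt
      rw [neg_smul, sub_neg_eq_add, ← sub_eq_add_neg] at h
      rw [← hMsa_minus, hstar_minus, map_sub, LinearMap.map_smul, LinearMap.map_smul,
        map_add, LinearMap.map_smul, LinearMap.map_smul, ← hXdef, ← hXtdef, h, ← hCdef,
        mul_neg, htcc, neg_smul, neg_mul_neg, sub_eq_add_neg ((tc * tc) • (X * X))]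
    set P : Matrix (Fin 2) (Fin 2) ℂ := (tc * tc) • D - (c * c) • Dt with hPdef
    set K : Matrix (Fin 2) (Fin 2) ℂ := Complex.I • C with hKdef
    have h1 : (P - K).PosSemidef := by
      have hh := hplus
      rw [hprod_plus, map_sub, LinearMap.map_smul, LinearMap.map_smul, hMquad_plus] at hh
      convert hh using 1
      rw [hPdef, hKdef, hDdef, hDtdef, smul_sub, smul_sub]
      abel
    have h2 : (P + K).PosSemidef := by
      have hh := hminus
      rw [hprod_minus, map_sub, LinearMap.map_smul, LinearMap.map_smul, hMquad_minus] at hh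
      convert hh using 1
      rw [hPdef, hKdef, hDdef, hDtdef, smul_sub, smul_sub]
      abel
    have hn := aux_norm_le K P h1 h2
    have hnK : ‖K‖ = ‖C‖ := by rw [hKdef, norm_smul, Complex.norm_I, one_mul]
    have e2 : ‖(tc * tc : ℂ)‖ = s := by
      rw [htcdef, ← Complex.ofReal_mul, Complex.norm_real, Real.norm_eq_abs,
        abs_of_pos (by nlinarith), hts]
    have e3 : ‖(c * c : ℂ)‖ = 1 / s := by
      rw [← norm_neg, hcc, norm_div, norm_one, e2]
    have hnP : ‖P‖ ≤ s * ‖D‖ + ‖Dt‖ / s := by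
      calc ‖P‖ ≤ ‖(tc * tc) • D‖ + ‖(c * c) • Dt‖ := norm_sub_le _ _
        _ = s * ‖D‖ + (1 / s) * ‖Dt‖ := by rw [norm_smul, norm_smul, e2, e3]
        _ = s * ‖D‖ + ‖Dt‖ / s := by ring
    calc ‖C‖ = ‖K‖ := hnK.symm
      _ ≤ ‖P‖ := hn
      _ ≤ s * ‖D‖ + ‖Dt‖ / s := hnP
  have hfin := aux_opt (norm_nonneg D) (norm_nonneg Dt) (norm_nonneg C) key
  rw [pow_two Y, pow_two Ytilde, pow_two X, pow_two Xt, ← hDdef, ← hDtdef]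
  exact hfin
end
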